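/- With β̂_w the minimizer of the adaptively weighted elastic-net objective ‖y - Xβ‖₂² + λ₂‖β‖₂² + λ₁∑_j ŵ_j|β_j| and β̂₀ the minimizer of the ridge objective ‖y - Xβ‖₂² + λ₂‖β‖₂², one has ‖β̂_w - β̂₀‖₂ ≤ λ₁ sqrt(∑_j ŵ_j²) / (λ_min(XᵀX) + λ₂). -/

import Mathlib

open Matrix

lemma rayleigh_min {p : ℕ} (hp : 0 < p) (A : Matrix (Fin p) (Fin p) ℝ)
    (hA : A.IsHermitian) (v : Fin p → ℝ) :
    (⨅ i, hA.eigenvalues i) * (v ⬝ᵥ v) ≤ v ⬝ᵥ (A *ᵥ v) := by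
  haveI : Nonempty (Fin p) := ⟨⟨0, hp⟩⟩
  set U : Matrix (Fin p) (Fin p) ℝ := (hA.eigenvectorUnitary : Matrix (Fin p) (Fin p) ℝ) with hU
  set u : Fin p → ℝ := Uᵀ *ᵥ v with hu
  have hUU : U * star U = 1 := (Matrix.mem_unitaryGroup_iff).mp hA.eigenvectorUnitary.2
  have hstar : star U = Uᵀ := by
    rw [Matrix.star_eq_conjTranspose, conjTranspose_eq_transpose_of_trivial]
  have key : v ⬝ᵥ (A *ᵥ v) = ∑ i, hA.eigenvalues i * (u i)^2 := by
    conv_lhs => rw [hA.spectral_theorem]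
    rw [Unitary.conjStarAlgAut_apply, ← hU]
    rw [hstar, ← mulVec_mulVec, ← mulVec_mulVec, dotProduct_mulVec, ← mulVec_transpose, ← hu]
    simp [dotProduct, diagonal_mulVec_single, mulVec, diagonal_apply, Finset.mul_sum,
      Finset.sum_ite_eq, mul_comm, pow_two]
    ring_nf
    apply Finset.sum_congr rfl
    intro i _
    ring
  have key2 : v ⬝ᵥ v = ∑ i, (u i)^2 := by
    have : (∑ i, (u i)^2) = u ⬝ᵥ u := by simp [dotProduct, pow_two]
    rw [this]
    have h2 : u ⬝ᵥ u = (U *ᵥ u) ⬝ᵥ v := by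
      conv_lhs => rw [show u ⬝ᵥ u = u ⬝ᵥ (Uᵀ *ᵥ v) from by rw [← hu]]
      rw [dotProduct_mulVec, vecMul_transpose]
    rw [h2, hu, mulVec_mulVec, ← hstar, hUU, one_mulVec]
  rw [key, key2, Finset.mul_sum]
  apply Finset.sum_le_sum
  intro i _
  have h1 : (⨅ j, hA.eigenvalues j) ≤ hA.eigenvalues i :=
    ciInf_le (Set.Finite.bddBelow (Set.finite_range _)) i
  nlinarith [sq_nonneg (u i)]

lemma linear_zero (L Q : ℝ) (hQ : 0 ≤ Q) (h : ∀ t : ℝ, 0 ≤ t * L + t ^ 2 * Q) : L = 0 := by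
  have h1 := h (-L / (2 * (Q + 1)))
  have hQ1 : 0 < Q + 1 := by linarith
  have h4 : (0:ℝ) < 4 * (Q + 1) ^ 2 := by positivity
  have heq : (-L / (2 * (Q + 1))) * L + (-L / (2 * (Q + 1))) ^ 2 * Q
      = -(L ^ 2 * (Q + 2)) / (4 * (Q + 1) ^ 2) := by
    field_simp
    ring
  rw [heq] at h1
  have h5 : 0 ≤ -(L ^ 2 * (Q + 2)) := by
    have := mul_nonneg h1 h4.le
    rwa [div_mul_cancel₀ _ (ne_of_gt h4)] at this
  have h6 : L ^ 2 = 0 := by nlinarith [sq_nonneg L]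
  exact pow_eq_zero_iff (by norm_num) |>.mp h6

/-- `‖β̂w - β̂₀‖₂ ≤ λ₁ sqrt(∑ ŵ_j²) / (λ_min(XᵀX) + λ₂)`, where `β̂w` minimizes the
adaptively weighted elastic-net objective and `β̂₀` the ridge objective. -/
theorem stmt_4 {n p : ℕ} (hp : 0 < p) (y : Fin n → ℝ) (X : Matrix (Fin n) (Fin p) ℝ)
    (hH : (Xᵀ * X).IsHermitian)
    (l2 l1 : ℝ) (hl2 : 0 < l2) (hl1 : 0 ≤ l1)
    (w : Fin p → ℝ) (hw : ∀ j, 0 ≤ w j)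
    (bw b0 : Fin p → ℝ)
    (hbw : ∀ β : Fin p → ℝ,
      (∑ i, (y i - X.mulVec bw i) ^ 2) + l2 * ∑ j, (bw j) ^ 2
          + l1 * ∑ j, w j * |bw j| ≤
        (∑ i, (y i - X.mulVec β i) ^ 2) + l2 * ∑ j, (β j) ^ 2
          + l1 * ∑ j, w j * |β j|)
    (hb0 : ∀ β : Fin p → ℝ,
      (∑ i, (y i - X.mulVec b0 i) ^ 2) + l2 * ∑ j, (b0 j) ^ 2 ≤
        (∑ i, (y i - X.mulVec β i) ^ 2) + l2 * ∑ j, (β j) ^ 2) :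
    Real.sqrt (∑ j, (bw j - b0 j) ^ 2) ≤
      l1 * Real.sqrt (∑ j, (w j) ^ 2) / ((⨅ i, hH.eigenvalues i) + l2) := by
  set Δ : Fin p → ℝ := fun j => bw j - b0 j with hΔ
  set A := ∑ i, (y i - X.mulVec b0 i) ^ 2 with hA
  set B := ∑ j, (b0 j) ^ 2 with hB
  set C := ∑ i, (y i - X.mulVec b0 i) * X.mulVec Δ i with hC
  set D := ∑ j, b0 j * Δ j with hD
  set E := ∑ i, (X.mulVec Δ i) ^ 2 with hE
  set F := ∑ j, (Δ j) ^ 2 with hF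
  have hEnn : 0 ≤ E := Finset.sum_nonneg fun i _ => sq_nonneg _
  have hFnn : 0 ≤ F := Finset.sum_nonneg fun j _ => sq_nonneg _
  -- expansion of the ridge objective along b0 + t Δ
  have hm : ∀ (t : ℝ) (i : Fin n),
      X.mulVec (fun j => b0 j + t * Δ j) i = X.mulVec b0 i + t * X.mulVec Δ i := by
    intro t i
    simp only [mulVec, dotProduct]
    rw [Finset.mul_sum, ← Finset.sum_add_distrib]
    exact Finset.sum_congr rfl fun j _ => by ring
  have hexp : ∀ t : ℝ,
      (∑ i, (y i - X.mulVec (fun j => b0 j + t * Δ j) i) ^ 2)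
        + l2 * ∑ j, ((fun j => b0 j + t * Δ j) j) ^ 2
      = (A + l2 * B) + t * (2 * l2 * D - 2 * C) + t ^ 2 * (E + l2 * F) := by
    intro t
    have e1 : ∑ i, (y i - X.mulVec (fun j => b0 j + t * Δ j) i) ^ 2
        = A - 2 * t * C + t ^ 2 * E := by
      rw [hA, hC, hE, Finset.mul_sum, Finset.mul_sum, ← Finset.sum_sub_distrib,
        ← Finset.sum_add_distrib]
      exact Finset.sum_congr rfl fun i _ => by rw [hm t i]; ring
    have e2 : (∑ j, ((fun j => b0 j + t * Δ j) j) ^ 2) = B + 2 * t * D + t ^ 2 * F := by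
      rw [hB, hD, hF, Finset.mul_sum, Finset.mul_sum, ← Finset.sum_add_distrib,
        ← Finset.sum_add_distrib]
      exact Finset.sum_congr rfl fun j _ => by ring
    rw [e1, e2]; ring
  -- the linear term vanishes
  have hL : 2 * l2 * D - 2 * C = 0 := by
    apply linear_zero _ (E + l2 * F) (by positivity)
    intro t
    have := hb0 (fun j => b0 j + t * Δ j)
    rw [hexp t] at this
    linarith
  -- ridge objective at bw
  have hbw_eq : bw = fun j => b0 j + (1 : ℝ) * Δ j := by
    funext j; simp [hΔ]
  have hfbw : (∑ i, (y i - X.mulVec bw i) ^ 2) + l2 * ∑ j, (bw j) ^ 2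
      = (A + l2 * B) + (E + l2 * F) := by
    conv_lhs => rw [hbw_eq]
    rw [hexp 1]; rw [hL]; ring
  -- compare objectives: Q ≤ l1 * ∑ w |Δ|
  have hcmp := hbw b0
  rw [hfbw] at hcmp
  have habs : (∑ j, w j * |b0 j|) - (∑ j, w j * |bw j|) ≤ ∑ j, w j * |Δ j| := by
    rw [← Finset.sum_sub_distrib]
    apply Finset.sum_le_sum
    intro j _
    rw [← mul_sub]
    have h1 : |b0 j| - |bw j| ≤ |Δ j| := by
      have := abs_sub_abs_le_abs_sub (b0 j) (bw j)
      rw [abs_sub_comm] at this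
      exact this
    exact mul_le_mul_of_nonneg_left h1 (hw j)
  have hQle : E + l2 * F ≤ l1 * ∑ j, w j * |Δ j| := by
    have h2 : E + l2 * F ≤ l1 * ((∑ j, w j * |b0 j|) - (∑ j, w j * |bw j|)) := by
      rw [hA, hB] at hcmp; nlinarith [hcmp]
    calc E + l2 * F ≤ l1 * ((∑ j, w j * |b0 j|) - (∑ j, w j * |bw j|)) := h2
      _ ≤ l1 * ∑ j, w j * |Δ j| := mul_le_mul_of_nonneg_left habs hl1
  -- Cauchy–Schwarz
  set W := Real.sqrt (∑ j, (w j) ^ 2) with hW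
  set s := Real.sqrt F with hs
  have hWnn : 0 ≤ W := Real.sqrt_nonneg _
  have hsnn : 0 ≤ s := Real.sqrt_nonneg _
  have hCS : (∑ j, w j * |Δ j|) ≤ W * s := by
    have h1 : (∑ j, w j * |Δ j|) ^ 2 ≤ (∑ j, (w j) ^ 2) * ∑ j, |Δ j| ^ 2 :=
      Finset.sum_mul_sq_le_sq_mul_sq _ _ _
    have h2 : (∑ j, |Δ j| ^ 2) = F := by
      rw [hF]; exact Finset.sum_congr rfl fun j _ => sq_abs _
    rw [h2] at h1
    have h3 : 0 ≤ ∑ j, w j * |Δ j| :=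
      Finset.sum_nonneg fun j _ => mul_nonneg (hw j) (abs_nonneg _)
    have h4 : W * s = Real.sqrt ((∑ j, (w j) ^ 2) * F) := by
      rw [hW, hs, Real.sqrt_mul (Finset.sum_nonneg fun j _ => sq_nonneg _)]
    rw [h4]
    calc (∑ j, w j * |Δ j|) = Real.sqrt ((∑ j, w j * |Δ j|) ^ 2) := by
          rw [Real.sqrt_sq h3]
      _ ≤ Real.sqrt ((∑ j, (w j) ^ 2) * F) := Real.sqrt_le_sqrt h1
  -- eigenvalue lower bound
  set lm := ⨅ i, hH.eigenvalues i with hlm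
  haveI : Nonempty (Fin p) := ⟨⟨0, hp⟩⟩
  have hpsd : (Xᵀ * X).PosSemidef := by
    have := Matrix.posSemidef_conjTranspose_mul_self X
    rwa [conjTranspose_eq_transpose_of_trivial] at this
  have hlmnn : 0 ≤ lm := le_ciInf fun i => hpsd.eigenvalues_nonneg i
  have hEF : lm * F ≤ E := by
    have h1 := rayleigh_min hp (Xᵀ * X) hH Δ
    have h2 : Δ ⬝ᵥ ((Xᵀ * X) *ᵥ Δ) = E := by
      rw [← mulVec_mulVec, dotProduct_mulVec, vecMul_transpose, hE]
      simp [dotProduct, pow_two]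
    have h3 : Δ ⬝ᵥ Δ = F := by simp [dotProduct, hF, pow_two]
    rw [h2, h3] at h1
    exact h1
  -- combine
  have hc : 0 < lm + l2 := by linarith
  have hFs : F = s ^ 2 := by rw [hs, Real.sq_sqrt hFnn]
  rw [le_div_iff₀ hc]
  have hkey : (lm + l2) * s ^ 2 ≤ l1 * (W * s) := by
    calc (lm + l2) * s ^ 2 = lm * F + l2 * F := by rw [hFs]; ring
      _ ≤ E + l2 * F := by linarith
      _ ≤ l1 * ∑ j, w j * |Δ j| := hQle
      _ ≤ l1 * (W * s) := mul_le_mul_of_nonneg_left hCS hl1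
  rcases eq_or_lt_of_le hsnn with h | h
  · rw [← h]; simp; positivity
  · nlinarith
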